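/- The image of the map φ : ℂ³ × ℂ³ → ℂ⁶ defined by φ((x,y,z),(p,q,r)) = (2xp, 2yq, 2zr, xq+yp, xr+zp, yr+zq) is exactly the zero set {y ∈ ℂ⁶ : d(y₁,…,y₆) = 0} of the cubic d(y₁,…,y₆) = y₁y₂y₃ + 2y₄y₅y₆ − y₁y₆² − y₂y₅² − y₃y₄². -/

import Mathlib

/-- Key case: if `a ≠ 0` and the cubic vanishes, a preimage exists. -/
lemma key_case (a b c d e f : ℂ) (ha : a ≠ 0)
    (hcube : a * b * c + 2 * d * e * f - a * f ^ 2 - b * e ^ 2 - c * d ^ 2 = 0) :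
    ∃ x y z p q r : ℂ,
      a = 2 * x * p ∧ b = 2 * y * q ∧ c = 2 * z * r ∧
      d = x * q + y * p ∧ e = x * r + z * p ∧ f = y * r + z * q := by
  obtain ⟨s, hs⟩ : ∃ s : ℂ, s ^ 2 = d ^ 2 - a * b :=
    IsAlgClosed.exists_pow_nat_eq (d ^ 2 - a * b) two_pos
  obtain ⟨t, ht⟩ : ∃ t : ℂ, t ^ 2 = e ^ 2 - a * c :=
    IsAlgClosed.exists_pow_nat_eq (e ^ 2 - a * c) two_pos
  have hprod : (s * t - (d * e - a * f)) * (s * t + (d * e - a * f)) = 0 := by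
    have h1 : (s * t) ^ 2 = (d ^ 2 - a * b) * (e ^ 2 - a * c) := by
      rw [mul_pow, hs, ht]
    linear_combination h1 + a * hcube
  rcases mul_eq_zero.mp hprod with h | h
  · -- s * t = d * e - a * f
    have hst : s * t = d * e - a * f := by linear_combination h
    refine ⟨1, (d + s) / a, (e + t) / a, a / 2, (d - s) / 2, (e - t) / 2, ?_, ?_, ?_, ?_, ?_, ?_⟩
    · ring
    · field_simp
      linear_combination hs
    · field_simp
      linear_combination ht
    · field_simp
      ring
    · field_simp
      ring
    · field_simp
      linear_combination 2 * hst
  · -- s * t = -(d * e - a * f); replace t by -t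
    have hst : s * (-t) = d * e - a * f := by linear_combination -h
    have ht' : (-t) ^ 2 = e ^ 2 - a * c := by linear_combination ht
    refine ⟨1, (d + s) / a, (e + (-t)) / a, a / 2, (d - s) / 2, (e - (-t)) / 2,
      ?_, ?_, ?_, ?_, ?_, ?_⟩
    · ring
    · field_simp
      linear_combination hs
    · field_simp
      linear_combination ht'
    · field_simp
      ring
    · field_simp
      ring
    · field_simp
      linear_combination 2 * hst

/-- The image of φ : ℂ³ × ℂ³ → ℂ⁶,
φ((x,y,z),(p,q,r)) = (2xp, 2yq, 2zr, xq+yp, xr+zp, yr+zq),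
is exactly the zero set of the cubic
d = y₁y₂y₃ + 2y₄y₅y₆ − y₁y₆² − y₂y₅² − y₃y₄². -/
theorem image_of_phi_is_cubic (w : Fin 6 → ℂ) :
    (∃ x y z p q r : ℂ,
      w 0 = 2 * x * p ∧
      w 1 = 2 * y * q ∧
      w 2 = 2 * z * r ∧
      w 3 = x * q + y * p ∧
      w 4 = x * r + z * p ∧
      w 5 = y * r + z * q) ↔
    w 0 * w 1 * w 2 + 2 * w 3 * w 4 * w 5
      - w 0 * w 5 ^ 2 - w 1 * w 4 ^ 2 - w 2 * w 3 ^ 2 = 0 := by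
  constructor
  · rintro ⟨x, y, z, p, q, r, h0, h1, h2, h3, h4, h5⟩
    rw [h0, h1, h2, h3, h4, h5]
    ring
  · intro hd
    by_cases h0 : w 0 ≠ 0
    · exact key_case _ _ _ _ _ _ h0 hd
    by_cases h1 : w 1 ≠ 0
    · -- swap roles: apply key with (w1, w0, w2, w3, w5, w4)
      obtain ⟨x, y, z, p, q, r, e0, e1, e2, e3, e4, e5⟩ :=
        key_case (w 1) (w 0) (w 2) (w 3) (w 5) (w 4) h1 (by linear_combination hd)
      exact ⟨y, x, z, q, p, r, e1, e0, e2, by linear_combination e3,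
        by linear_combination e5, by linear_combination e4⟩
    by_cases h2 : w 2 ≠ 0
    · -- swap roles: apply key with (w2, w1, w0, w5, w4, w3)
      obtain ⟨x, y, z, p, q, r, e0, e1, e2, e3, e4, e5⟩ :=
        key_case (w 2) (w 1) (w 0) (w 5) (w 4) (w 3) h2 (by linear_combination hd)
      exact ⟨z, y, x, r, q, p, e2, e1, e0, by linear_combination e5,
        by linear_combination e4, by linear_combination e3⟩
    push_neg at h0 h1 h2
    -- now w0 = w1 = w2 = 0, so 2 w3 w4 w5 = 0
    rw [h0, h1, h2] at hd
    have h345 : w 3 * (w 4 * w 5) = 0 := by linear_combination hd / 2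
    rcases mul_eq_zero.mp h345 with h3 | h45
    · exact ⟨0, 0, 1, w 4, w 5, 0, by simp [h0], by simp [h1], by simp [h2],
        by simp [h3], by ring, by ring⟩
    rcases mul_eq_zero.mp h45 with h4 | h5
    · exact ⟨0, 1, 0, w 3, 0, w 5, by simp [h0], by simp [h1], by simp [h2],
        by ring, by simp [h4], by ring⟩
    · exact ⟨1, 0, 0, 0, w 3, w 4, by simp [h0], by simp [h1], by simp [h2],
        by ring, by ring, by simp [h5]⟩
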